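/- Let Z_u = (1/2^K) Σ_{x ∈ {−1,1}^K} exp(H(x) + h_u(x)) where h_u(x) = √u Σ_k h_k x_k + u Σ_k x_k⁰ x_k − √u Σ_k |h_k|, with fixed reals h_k, fixed x⁰ ∈ {−1,1}^K, and H any fixed real-valued function on {−1,1}^K. Then the free energy f(u) = (1/K) ln Z_u is a convex function of u on (0,∞). -/

import Mathlib

open Real

/-- Spin value of a boolean configuration entry: `true ↦ 1`, `false ↦ −1`. -/
noncomputable def spinVal : Bool → ℝ := fun b => if b then 1 else -1

/-- log-sum-exp of convex functions is convex. -/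
theorem convexOn_log_sum_exp {ι : Type*} [Fintype ι] [Nonempty ι] {s : Set ℝ}
    (hs : Convex ℝ s) (g : ι → ℝ → ℝ) (hg : ∀ i, ConvexOn ℝ s (g i)) :
    ConvexOn ℝ s (fun u => Real.log (∑ i, Real.exp (g i u))) := by
  refine ⟨hs, fun x hx y hy a b ha hb hab => ?_⟩
  rcases eq_or_lt_of_le ha with rfl | ha'
  · simp at hab; subst hab; simp
  rcases eq_or_lt_of_le hb with rfl | hb'
  · simp at hab; subst hab; simp
  have hxpos : 0 < ∑ i, Real.exp (g i x) :=
    Finset.sum_pos (fun i _ => Real.exp_pos _) Finset.univ_nonempty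
  have hypos : 0 < ∑ i, Real.exp (g i y) :=
    Finset.sum_pos (fun i _ => Real.exp_pos _) Finset.univ_nonempty
  have h1 : ∑ i, Real.exp (g i (a • x + b • y))
      ≤ ∑ i, (Real.exp (g i x)) ^ a * (Real.exp (g i y)) ^ b := by
    refine Finset.sum_le_sum fun i _ => ?_
    have := (hg i).2 hx hy ha hb hab
    calc Real.exp (g i (a • x + b • y)) ≤ Real.exp (a * g i x + b * g i y) := by
          exact Real.exp_le_exp.2 (by simpa [smul_eq_mul] using this)
      _ = (Real.exp (g i x)) ^ a * (Real.exp (g i y)) ^ b := by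
          rw [Real.exp_add, Real.rpow_def_of_pos (Real.exp_pos _),
            Real.rpow_def_of_pos (Real.exp_pos _), Real.log_exp, Real.log_exp,
            mul_comm (g i x) a, mul_comm (g i y) b]
  have hpq : Real.HolderConjugate (1/a) (1/b) := by
    rw [Real.holderConjugate_iff]; constructor
    · rw [lt_div_iff₀ ha']; linarith
    · simp [one_div, inv_inv]; linarith
  have h2 : ∑ i, (Real.exp (g i x)) ^ a * (Real.exp (g i y)) ^ b
      ≤ (∑ i, Real.exp (g i x)) ^ a * (∑ i, Real.exp (g i y)) ^ b := by
    have := Real.inner_le_Lp_mul_Lq_of_nonneg (s := Finset.univ) hpq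
      (f := fun i => (Real.exp (g i x)) ^ a) (g := fun i => (Real.exp (g i y)) ^ b)
      (fun i _ => Real.rpow_nonneg (Real.exp_pos _).le _)
      (fun i _ => Real.rpow_nonneg (Real.exp_pos _).le _)
    simpa [← Real.rpow_natCast, ← Real.rpow_mul (Real.exp_pos _).le,
      one_div, inv_inv, mul_inv_cancel₀ ha'.ne', mul_inv_cancel₀ hb'.ne'] using this
  calc Real.log (∑ i, Real.exp (g i (a • x + b • y)))
      ≤ Real.log ((∑ i, Real.exp (g i x)) ^ a * (∑ i, Real.exp (g i y)) ^ b) :=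
        Real.log_le_log (Finset.sum_pos (fun i _ => Real.exp_pos _) Finset.univ_nonempty)
          (h1.trans h2)
    _ = a * Real.log (∑ i, Real.exp (g i x)) + b * Real.log (∑ i, Real.exp (g i y)) := by
        rw [Real.log_mul (Real.rpow_pos_of_pos hxpos _).ne' (Real.rpow_pos_of_pos hypos _).ne',
          Real.log_rpow hxpos, Real.log_rpow hypos]
    _ = a • Real.log (∑ i, Real.exp (g i x)) + b • Real.log (∑ i, Real.exp (g i y)) := by
        simp [smul_eq_mul]

/-- `u ↦ e + c√u + du` is convex on `(0,∞)` when `c ≤ 0`. -/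
theorem convexOn_aux {c : ℝ} (hc : c ≤ 0) (d e : ℝ) :
    ConvexOn ℝ (Set.Ioi (0:ℝ)) (fun u => e + c * Real.sqrt u + d * u) := by
  have hsqrt : ConcaveOn ℝ (Set.Ioi (0:ℝ)) (fun u : ℝ => Real.sqrt u) :=
    (Real.strictConcaveOn_sqrt.concaveOn).subset
      (Set.Ioi_subset_Ici le_rfl) (convex_Ioi 0)
  have h1 : ConvexOn ℝ (Set.Ioi (0:ℝ)) (fun u : ℝ => c * Real.sqrt u) := by
    have := (hsqrt.smul (c := -c) (by linarith)).neg
    convert! this using 1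
    funext u
    simp [smul_eq_mul]
  have h2 : ConvexOn ℝ (Set.Ioi (0:ℝ)) (fun u : ℝ => e + d * u) :=
    ⟨convex_Ioi 0, fun x _ y _ a b ha hb hab =>
      le_of_eq (by simp only [smul_eq_mul]; linear_combination (-e) * hab)⟩
  have := h1.add h2
  convert! this using 1
  funext u
  simp only [Pi.add_apply]
  ring

/-- The free energy `u ↦ (1/K) ln Z_u` of the Gibbs partition function with the perturbation
`h_u(x) = √u Σ h_k x_k + u Σ x⁰_k x_k − √u Σ |h_k|` is a convex function of `u` on `(0,∞)`. -/
theorem free_energy_perturbation_convex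
    (K : ℕ) (hK : 0 < K) (H : (Fin K → ℝ) → ℝ) (h : Fin K → ℝ)
    (x0 : Fin K → ℝ) (hx0 : ∀ k, x0 k = 1 ∨ x0 k = -1) :
    ConvexOn ℝ (Set.Ioi (0 : ℝ)) (fun u =>
      (1 / (K : ℝ)) * Real.log ((1 / 2 ^ K) * ∑ s : Fin K → Bool,
        Real.exp (H (fun k => spinVal (s k))
          + Real.sqrt u * ∑ k, h k * spinVal (s k)
          + u * ∑ k, x0 k * spinVal (s k)
          - Real.sqrt u * ∑ k, |h k|))) := by
  set g : (Fin K → Bool) → ℝ → ℝ := fun s u =>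
    H (fun k => spinVal (s k))
      + Real.sqrt u * ∑ k, h k * spinVal (s k)
      + u * ∑ k, x0 k * spinVal (s k)
      - Real.sqrt u * ∑ k, |h k| with hg_def
  have hgconv : ∀ s, ConvexOn ℝ (Set.Ioi (0:ℝ)) (g s) := by
    intro s
    have hcle : (∑ k, h k * spinVal (s k)) - (∑ k, |h k|) ≤ 0 := by
      have : ∑ k, h k * spinVal (s k) ≤ ∑ k, |h k| := by
        refine Finset.sum_le_sum fun k _ => ?_
        have : |h k * spinVal (s k)| = |h k| := by
          unfold spinVal; rcases (s k) <;> simp [abs_mul]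
        calc h k * spinVal (s k) ≤ |h k * spinVal (s k)| := le_abs_self _
          _ = |h k| := this
      linarith
    have := convexOn_aux hcle (∑ k, x0 k * spinVal (s k)) (H (fun k => spinVal (s k)))
    convert this using 1
    funext u
    simp only [hg_def]
    ring
  have key : ConvexOn ℝ (Set.Ioi (0:ℝ))
      (fun u => Real.log (∑ s : Fin K → Bool, Real.exp (g s u))) :=
    convexOn_log_sum_exp (convex_Ioi 0) g hgconv
  have hS : ∀ u : ℝ, (0:ℝ) < ∑ s : Fin K → Bool, Real.exp (g s u) :=
    fun u => Finset.sum_pos (fun s _ => Real.exp_pos _) Finset.univ_nonempty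
  have heq : (fun u =>
      (1 / (K : ℝ)) * Real.log ((1 / 2 ^ K) * ∑ s : Fin K → Bool, Real.exp (g s u)))
      = fun u => (1 / (K : ℝ)) * Real.log (1 / 2 ^ K)
        + (1 / (K : ℝ)) * Real.log (∑ s : Fin K → Bool, Real.exp (g s u)) := by
    funext u
    rw [Real.log_mul (by positivity) (hS u).ne', mul_add]
  show ConvexOn ℝ (Set.Ioi (0:ℝ)) (fun u =>
      (1 / (K : ℝ)) * Real.log ((1 / 2 ^ K) * ∑ s : Fin K → Bool, Real.exp (g s u)))
  rw [heq]
  exact (convexOn_const _ (convex_Ioi 0)).add (key.smul (by positivity))
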